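/- The number of spanning trees of the fan graph F_{n+1} (hub vertex joined to every vertex of a path on n vertices) equals f_{2n}, the Fibonacci number of index 2n. -/

import Mathlib

inductive St | hub | left | right
deriving DecidableEq

instance : Fintype St := ⟨{St.hub, St.left, St.right}, fun x => by cases x <;> simp⟩

open St in
def Gd {n : ℕ} (b : Bool) (s : Fin n → St) : Prop :=
  (∀ i, s i = left → (0 < (i : ℕ) ∨ b = false)) ∧
  (∀ i, s i = right → (i : ℕ) + 1 < n) ∧
  (∀ i j, s i = right → s j = left → (i : ℕ) + 1 ≠ (j : ℕ))

open St

lemma gd_cons_hub {n : ℕ} (b : Bool) (t : Fin n → St) :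
    Gd b (Fin.cons hub t) ↔ Gd false t := by
  unfold Gd
  simp only [Fin.forall_fin_succ, Fin.cons_zero, Fin.cons_succ, Fin.val_succ, Fin.val_zero,
    reduceCtorEq, true_implies, false_implies, true_and, and_true, forall_const, or_false,
    Bool.false_eq_true, or_true, implies_true]
  constructor
  · rintro ⟨-, hB, hC⟩
    exact ⟨fun i hi => by have := hB i hi; omega,
           fun i j hi hj => by have := hC i j hi hj; omega⟩
  · rintro ⟨hB, hC⟩
    exact ⟨fun i _ => Or.inl (by omega),
           fun i hi => by have := hB i hi; omega,
           fun i j hi hj => by have := hC i j hi hj; omega⟩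

lemma gd_cons_left {n : ℕ} (b : Bool) (t : Fin n → St) :
    Gd b (Fin.cons left t) ↔ b = false ∧ Gd false t := by
  unfold Gd
  simp only [Fin.forall_fin_succ, Fin.cons_zero, Fin.cons_succ, Fin.val_succ, Fin.val_zero,
    reduceCtorEq, true_implies, false_implies, true_and, and_true, forall_const, or_false,
    Bool.false_eq_true, or_true, implies_true]
  constructor
  · rintro ⟨⟨h0, -⟩, hB, hC⟩
    exact ⟨by rcases h0 with h | h; exacts [absurd h (by omega), h],
           fun i hi => by have := hB i hi; omega,
           fun i j hi hj => by have := (hC i).2 j hi hj; omega⟩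
  · rintro ⟨hb, hB, hC⟩
    exact ⟨⟨Or.inr hb, fun i _ => Or.inl (by omega)⟩,
           fun i hi => by have := hB i hi; omega,
           fun i => ⟨fun hi => by omega, fun j hi hj => by have := hC i j hi hj; omega⟩⟩

lemma gd_cons_right {n : ℕ} (b : Bool) (t : Fin n → St) :
    Gd b (Fin.cons right t) ↔ 0 < n ∧ Gd true t := by
  unfold Gd
  simp only [Fin.forall_fin_succ, Fin.cons_zero, Fin.cons_succ, Fin.val_succ, Fin.val_zero,
    reduceCtorEq, true_implies, false_implies, true_and, and_true, forall_const, or_false,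
    Bool.false_eq_true, or_true, implies_true]
  constructor
  · rintro ⟨hA, ⟨h1, hB⟩, hL, hC⟩
    exact ⟨by omega,
           fun i hi => by have := hL i hi; omega,
           fun i hi => by have := hB i hi; omega,
           fun i j hi hj => by have := hC i j hi hj; omega⟩
  · rintro ⟨hn, hA, hB, hC⟩
    exact ⟨fun i hi => Or.inl (by omega),
           ⟨by omega, fun i hi => by have := hB i hi; omega⟩,
           fun i hi => by have := hA i hi; omega,
           fun i j hi hj => by have := hC i j hi hj; omega⟩

def splitEquiv {n : ℕ} (P : (Fin (n+1) → St) → Prop) :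
    {s : Fin (n+1) → St // P s} ≃ Σ a : St, {t : Fin n → St // P (Fin.cons a t)} where
  toFun s := ⟨s.1 0, Fin.tail s.1, by
    have : Fin.cons (s.1 0) (Fin.tail s.1) = s.1 := Fin.cons_self_tail s.1
    rw [this]; exact s.2⟩
  invFun x := ⟨Fin.cons x.1 x.2.1, x.2.2⟩
  left_inv s := Subtype.ext (Fin.cons_self_tail s.1)
  right_inv x := by
    rcases x with ⟨a, t, ht⟩
    rfl

lemma natCard_sigma_st (f : St → Type) [∀ a, Finite (f a)] :
    Nat.card (Σ a, f a) = Nat.card (f hub) + Nat.card (f left) + Nat.card (f right) := by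
  have e : (Σ a, f a) ≃ (f hub ⊕ f left ⊕ f right) :=
    { toFun := fun x => match x with
        | ⟨hub, y⟩ => .inl y | ⟨left, y⟩ => .inr (.inl y) | ⟨right, y⟩ => .inr (.inr y)
      invFun := fun x => match x with
        | .inl y => ⟨hub, y⟩ | .inr (.inl y) => ⟨left, y⟩ | .inr (.inr y) => ⟨right, y⟩
      left_inv := fun x => by rcases x with ⟨a, y⟩; cases a <;> rfl
      right_inv := fun x => by rcases x with y | y | y <;> rfl }
  rw [Nat.card_congr e, Nat.card_sum, Nat.card_sum]; ring

lemma card_gd (n : ℕ) (b : Bool) :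
    Nat.card {s : Fin n → St // Gd b s} =
      if n = 0 then 1 else if b then Nat.fib (2*n) else Nat.fib (2*n+1) := by
  induction n generalizing b with
  | zero =>
    have h : ∀ s : Fin 0 → St, Gd b s := by
      intro s; exact ⟨fun i => i.elim0, fun i => i.elim0, fun i => i.elim0⟩
    rw [Nat.card_congr (Equiv.subtypeUnivEquiv h)]
    simp [Nat.card_unique]
  | succ n ih =>
    rw [Nat.card_congr (splitEquiv (Gd b)), natCard_sigma_st]
    have hhub : Nat.card {t : Fin n → St // Gd b (Fin.cons hub t)} =
        Nat.card {t : Fin n → St // Gd false t} :=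
      Nat.card_congr (Equiv.subtypeEquivRight (fun t => gd_cons_hub b t))
    have hleft : Nat.card {t : Fin n → St // Gd b (Fin.cons left t)} =
        if b then 0 else Nat.card {t : Fin n → St // Gd false t} := by
      cases b with
      | false =>
        simp only [if_false, Bool.false_eq_true]
        exact Nat.card_congr (Equiv.subtypeEquivRight (fun t => by
          rw [gd_cons_left]; simp))
      | true =>
        simp only [if_true]
        have : IsEmpty {t : Fin n → St // Gd true (Fin.cons left t)} := by
          constructor; rintro ⟨t, ht⟩
          rw [gd_cons_left] at ht; simp at ht
        exact Nat.card_of_isEmpty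
    have hright : Nat.card {t : Fin n → St // Gd b (Fin.cons right t)} =
        if n = 0 then 0 else Nat.card {t : Fin n → St // Gd true t} := by
      rcases Nat.eq_zero_or_pos n with hn | hn
      · subst hn
        simp only [if_true]
        have : IsEmpty {t : Fin 0 → St // Gd b (Fin.cons right t)} := by
          constructor; rintro ⟨t, ht⟩
          rw [gd_cons_right] at ht; omega
        exact Nat.card_of_isEmpty
      · rw [if_neg (by omega)]
        exact Nat.card_congr (Equiv.subtypeEquivRight (fun t => by
          rw [gd_cons_right]; simp [hn]))
    rw [hhub, hleft, hright, ih false, ih true]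
    have h1 : Nat.fib (2*(n+1)) = Nat.fib (2*n+1) + Nat.fib (2*n) := by
      have := Nat.fib_add_two (n := 2*n)
      rw [show 2*(n+1) = 2*n+2 by ring, this]; ring
    have h2 : Nat.fib (2*(n+1)+1) = Nat.fib (2*(n+1)) + Nat.fib (2*n+1) := by
      have := Nat.fib_add_two (n := 2*n+1)
      rw [show 2*(n+1)+1 = 2*n+1+2 by ring, this, show 2*(n+1) = 2*n+1+1 by ring]; ring
    rcases Nat.eq_zero_or_pos n with hn | hn
    · subst hn
      cases b <;> simp <;> norm_num [show (2:ℕ)*1 = 2 by ring, Nat.fib_add_two, Nat.fib_one]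
    · have hn0 : n ≠ 0 := by omega
      cases b <;> simp [hn0] <;> omega

open St

def fanGraph (n : ℕ) : SimpleGraph (Option (Fin n)) :=
  SimpleGraph.fromRel
    (fun a b => a = none ∨ ∃ i j : Fin n, a = some i ∧ b = some j ∧ (i : ℕ) + 1 = (j : ℕ))

def pvert {n : ℕ} (t : St) (i : Fin n) : Option (Fin n) :=
  match t with
  | .hub => none
  | .left => if _ : 0 < (i : ℕ) then some ⟨(i : ℕ) - 1, Nat.lt_of_le_of_lt (Nat.sub_le _ _) i.isLt⟩
             else some i
  | .right => if h : (i : ℕ) + 1 < n then some ⟨(i : ℕ) + 1, h⟩ else some i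

def par {n : ℕ} (s : Fin n → St) (i : Fin n) : Option (Fin n) := pvert (s i) i

section helpers
variable {n : ℕ} {s : Fin n → St}

lemma Gd.left_pos (hg : Gd true s) {i : Fin n} (h : s i = left) : 0 < (i : ℕ) := by
  rcases hg.1 i h with h' | h'
  · exact h'
  · simp at h'

lemma par_hub {i : Fin n} (h : s i = hub) : par s i = none := by simp [par, h, pvert]

lemma par_left (hg : Gd true s) {i : Fin n} (h : s i = left) :
    ∃ i' : Fin n, par s i = some i' ∧ (i' : ℕ) + 1 = (i : ℕ) := by
  have hp := hg.left_pos h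
  refine ⟨⟨(i : ℕ) - 1, Nat.lt_of_le_of_lt (Nat.sub_le _ _) i.isLt⟩,
    by simp [par, h, pvert, hp], by simp; omega⟩

lemma par_right (hg : Gd true s) {i : Fin n} (h : s i = right) :
    ∃ i' : Fin n, par s i = some i' ∧ (i : ℕ) + 1 = (i' : ℕ) := by
  have hp := hg.2.1 i h
  exact ⟨⟨(i : ℕ) + 1, hp⟩, by simp [par, h, pvert, hp], rfl⟩

/-- inversion: if the parent of `j` is `some v` then either `j` went left or right. -/
lemma par_inv (hg : Gd true s) {j v : Fin n} (h : par s j = some v) :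
    (s j = left ∧ (v : ℕ) + 1 = (j : ℕ)) ∨ (s j = right ∧ (j : ℕ) + 1 = (v : ℕ)) := by
  cases hsj : s j with
  | hub => rw [par_hub hsj] at h; simp at h
  | left =>
    obtain ⟨i', hi', hv⟩ := par_left hg hsj
    rw [hi'] at h
    left
    exact ⟨rfl, by rw [← Option.some_inj.mp h]; exact hv⟩
  | right =>
    obtain ⟨i', hi', hv⟩ := par_right hg hsj
    rw [hi'] at h
    right
    exact ⟨rfl, by rw [← Option.some_inj.mp h]; exact hv⟩

lemma fan_adj_par (hg : Gd true s) (i : Fin n) : (fanGraph n).Adj (some i) (par s i) := by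
  rw [fanGraph, SimpleGraph.fromRel_adj]
  cases hsi : s i with
  | hub =>
    rw [par_hub hsi]
    exact ⟨by simp, Or.inr (Or.inl rfl)⟩
  | left =>
    obtain ⟨i', hi', hv⟩ := par_left hg hsi
    rw [hi']
    refine ⟨by simp; omega, Or.inr (Or.inr ⟨i', i, rfl, rfl, hv⟩)⟩
  | right =>
    obtain ⟨i', hi', hv⟩ := par_right hg hsi
    rw [hi']
    refine ⟨by simp; omega, Or.inl (Or.inr ⟨i, i', rfl, rfl, hv⟩)⟩

end helpers

def phi {n : ℕ} (s : Fin n → St) : (fanGraph n).Subgraph where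
  verts := Set.univ
  Adj x y := (fanGraph n).Adj x y ∧
    ((∃ i, x = some i ∧ y = par s i) ∨ (∃ i, y = some i ∧ x = par s i))
  adj_sub h := h.1
  edge_vert _ := trivial
  symm := by
    constructor
    rintro x y ⟨hf, h⟩
    exact ⟨hf.symm, h.elim Or.inr Or.inl⟩

section phiLemmas
variable {n : ℕ} {s : Fin n → St}

lemma phi_spanning : (phi s).IsSpanning := fun _ => trivial

lemma phi_adj (hg : Gd true s) {x y : Option (Fin n)} :
    (phi s).spanningCoe.Adj x y ↔ ((∃ i, x = some i ∧ y = par s i) ∨ (∃ i, y = some i ∧ x = par s i)) := by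
  constructor
  · exact fun h => h.2
  · rintro (⟨i, rfl, rfl⟩ | ⟨i, rfl, rfl⟩)
    · exact ⟨fan_adj_par hg i, Or.inl ⟨i, rfl, rfl⟩⟩
    · exact ⟨(fan_adj_par hg i).symm, Or.inr ⟨i, rfl, rfl⟩⟩

lemma phi_edge_mem (hg : Gd true s) {e : Sym2 (Option (Fin n))} :
    e ∈ (phi s).spanningCoe.edgeSet ↔ ∃ i, e = s(some i, par s i) := by
  induction e with
  | _ x y =>
    rw [SimpleGraph.mem_edgeSet, phi_adj hg]
    constructor
    · rintro (⟨i, rfl, rfl⟩ | ⟨i, rfl, rfl⟩)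
      · exact ⟨i, rfl⟩
      · exact ⟨i, Sym2.eq_swap⟩
    · rintro ⟨i, he⟩
      rw [Sym2.eq_iff] at he
      rcases he with ⟨rfl, rfl⟩ | ⟨rfl, rfl⟩
      · exact Or.inl ⟨i, rfl, rfl⟩
      · exact Or.inr ⟨i, rfl, rfl⟩

/-- the map `i ↦ {some i, par s i}` is injective for good `s` -/
lemma eInj (hg : Gd true s) {i j : Fin n}
    (h : s(some i, par s i) = s(some j, par s j)) : i = j := by
  rw [Sym2.eq_iff] at h
  rcases h with ⟨h1, _⟩ | ⟨h1, h2⟩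
  · exact Option.some_inj.mp h1
  · -- some i = par s j and par s i = some j
    rcases par_inv hg h1.symm with ⟨hj, e1⟩ | ⟨hj, e1⟩ <;>
      rcases par_inv hg h2 with ⟨hi, e2⟩ | ⟨hi, e2⟩
    · omega
    · exfalso; exact hg.2.2 i j hi hj (by omega)
    · exfalso; exact hg.2.2 j i hj hi (by omega)
    · omega

/-- potential function decreasing along parents -/
def mu (s : Fin n → St) : Option (Fin n) → ℕ := fun v =>
  match v with
  | none => 0
  | some i => match s i with
    | .hub => 1
    | .left => 2 + (i : ℕ)
    | .right => 2 + n - (i : ℕ)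

lemma mu_par_lt (hg : Gd true s) (i : Fin n) : mu s (par s i) < mu s (some i) := by
  cases hsi : s i with
  | hub => rw [par_hub hsi]; simp [mu, hsi]
  | left =>
    obtain ⟨i', hi', hv⟩ := par_left hg hsi
    rw [hi']
    have hne : s i' ≠ right := by
      intro hr
      exact hg.2.2 i' i hr hsi (by omega)
    cases hsi' : s i' with
    | hub => simp [mu, hsi, hsi']; omega
    | left => simp only [mu, hsi, hsi']; omega
    | right => exact absurd hsi' hne
  | right =>
    obtain ⟨i', hi', hv⟩ := par_right hg hsi
    rw [hi']
    have hb := hg.2.1 i hsi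
    have hne : s i' ≠ left := by
      intro hl
      exact hg.2.2 i i' hsi hl (by omega)
    cases hsi' : s i' with
    | hub => simp only [mu, hsi, hsi']; omega
    | left => exact absurd hsi' hne
    | right =>
      have hb' : (i' : ℕ) + 1 < n ∨ ¬ ((i' : ℕ) + 1 < n) := em _
      simp only [mu, hsi, hsi']; omega

lemma phi_reachable (hg : Gd true s) (v : Option (Fin n)) :
    (phi s).spanningCoe.Reachable v none := by
  suffices H : ∀ m : ℕ, ∀ v : Option (Fin n), mu s v < m → (phi s).spanningCoe.Reachable v none by
    exact H (mu s v + 1) v (Nat.lt_succ_self _)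
  intro m
  induction m with
  | zero => intro v hv; omega
  | succ m ih =>
    intro v hv
    cases v with
    | none => exact SimpleGraph.Reachable.refl _
    | some i =>
      have hadj : (phi s).spanningCoe.Adj (some i) (par s i) :=
        (phi_adj hg).mpr (Or.inl ⟨i, rfl, rfl⟩)
      have hlt := mu_par_lt hg i
      exact hadj.reachable.trans (ih (par s i) (by omega))

lemma phi_connected (hg : Gd true s) : (phi s).spanningCoe.Connected := by
  rw [SimpleGraph.connected_iff]
  exact ⟨fun u v => (phi_reachable hg u).trans (phi_reachable hg v).symm, ⟨none⟩⟩

end phiLemmas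

section acyclic
variable {n : ℕ} {s : Fin n → St}

lemma phi_acyclic (hg : Gd true s) : (phi s).spanningCoe.IsAcyclic := by
  intro v c hc
  classical
  have hvtail : v ∈ c.support.tail := by
    cases c with
    | nil => exact absurd rfl hc.ne_nil
    | cons h q => simpa using q.end_mem_support
  have hsupp_tail : ∀ x ∈ c.support, x ∈ c.support.tail := by
    intro x hx
    rw [c.support_eq_cons] at hx
    rcases List.mem_cons.mp hx with rfl | hx
    · exact hvtail
    · exact hx
  have hidx : ∀ e ∈ c.edges, ∃ i : Fin n, e = s(some i, par s i) := fun e he =>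
    (phi_edge_mem hg).1 (c.edges_subset_edgeSet he)
  let idx : {e // e ∈ c.edges} → Fin n := fun e => (hidx e.1 e.2).choose
  have hspec : ∀ e : {e // e ∈ c.edges}, e.1 = s(some (idx e), par s (idx e)) := fun e =>
    (hidx e.1 e.2).choose_spec
  let f : {e // e ∈ c.edges} → Option (Fin n) := fun e => some (idx e)
  have hfinj : Function.Injective f := by
    intro e1 e2 h
    have : idx e1 = idx e2 := Option.some_inj.mp h
    exact Subtype.ext ((hspec e1).trans (by rw [this, ← hspec e2]))
  let U : List (Option (Fin n)) := c.edges.attach.map f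
  have hUnodup : U.Nodup := (List.nodup_attach.mpr hc.edges_nodup).map hfinj
  have hUsub : ∀ x ∈ U, x ∈ c.support.tail := by
    intro x hx
    obtain ⟨e, -, rfl⟩ := List.mem_map.mp hx
    apply hsupp_tail
    exact c.fst_mem_support_of_mem_edges ((hspec e) ▸ e.2)
  have hUlen : U.length = c.length := by
    simp [U, List.length_attach, c.length_edges]
  have htaillen : c.support.tail.length = c.length := by
    have := c.length_support
    have : c.support.length = c.length + 1 := this
    simp [List.length_tail, this]
  have hUT : U.toFinset = c.support.tail.toFinset := by
    apply Finset.eq_of_subset_of_card_le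
    · intro x hx
      exact List.mem_toFinset.mpr (hUsub x (List.mem_toFinset.mp hx))
    · rw [List.toFinset_card_of_nodup hUnodup, List.toFinset_card_of_nodup hc.support_nodup,
        hUlen, htaillen]
  obtain ⟨m, hmT, hmin⟩ := Finset.exists_min_image c.support.tail.toFinset (mu s)
    ⟨v, List.mem_toFinset.mpr hvtail⟩
  have hmU : m ∈ U.toFinset := by rw [hUT]; exact hmT
  obtain ⟨e, -, hfe⟩ := List.mem_map.mp (List.mem_toFinset.mp hmU)
  have hpar : par s (idx e) ∈ c.support.tail := by
    apply hsupp_tail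
    exact c.snd_mem_support_of_mem_edges ((hspec e) ▸ e.2)
  have h1 := hmin _ (List.mem_toFinset.mpr hpar)
  have h2 := mu_par_lt hg (idx e)
  rw [← hfe] at h1
  simp only [f] at h1
  omega

lemma isTree_of_iso {V W : Type*} {G : SimpleGraph V} {H : SimpleGraph W} (e : G ≃g H)
    (hG : G.IsTree) : H.IsTree := by
  constructor
  · rw [SimpleGraph.connected_iff] at *
    refine ⟨?_, ⟨e hG.isConnected.2.some⟩⟩
    intro u v
    have := hG.isConnected.1 (e.symm u) (e.symm v)
    have h2 := SimpleGraph.Iso.reachable_iff (φ := e) (u := e.symm u) (v := e.symm v)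
    rw [e.apply_symm_apply, e.apply_symm_apply] at h2
    first
      | exact h2.mp this
      | exact h2.mpr this
  · intro v c hc
    exact hG.2 (c.map e.symm.toHom) (hc.map (e.symm.injective))

lemma isTree_iff_of_iso {V W : Type*} {G : SimpleGraph V} {H : SimpleGraph W} (e : G ≃g H) :
    G.IsTree ↔ H.IsTree :=
  ⟨fun h => isTree_of_iso e h, fun h => isTree_of_iso e.symm h⟩

lemma phi_isTree (hg : Gd true s) : (phi s).coe.IsTree := by
  rw [← isTree_iff_of_iso ((phi s).spanningCoeEquivCoeOfSpanning phi_spanning)]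
  exact ⟨phi_connected hg, phi_acyclic hg⟩

end acyclic

section inj
variable {n : ℕ} {s s' : Fin n → St}

def ES (s : Fin n → St) : Set (Sym2 (Option (Fin n))) := (phi s).spanningCoe.edgeSet

lemma hub_mem (hg : Gd true s) {i : Fin n} :
    s i = hub ↔ s(some i, (none : Option (Fin n))) ∈ ES s := by
  rw [ES, phi_edge_mem hg]
  constructor
  · intro h; exact ⟨i, by rw [par_hub h]⟩
  · rintro ⟨j, hj⟩
    rw [Sym2.eq_iff] at hj
    rcases hj with ⟨h1, h2⟩ | ⟨h1, h2⟩
    · obtain rfl : i = j := Option.some_inj.mp h1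
      cases hsj : s i with
      | hub => rfl
      | left => obtain ⟨i', hpi, -⟩ := par_left hg hsj; rw [hpi] at h2; simp at h2
      | right => obtain ⟨i', hpi, -⟩ := par_right hg hsj; rw [hpi] at h2; simp at h2
    · simp at h2

lemma left_step (hg : Gd true s) (hg' : Gd true s') (hE : ES s = ES s') (i : Fin n)
    (IH : ∀ j : Fin n, (j : ℕ) < (i : ℕ) → s j = s' j) (hsi : s i = left) :
    s' i = left := by
  obtain ⟨i', hpi, hi'⟩ := par_left hg hsi
  have hmem : s(some i, (some i' : Option (Fin n))) ∈ ES s := by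
    rw [ES, phi_edge_mem hg]; exact ⟨i, by rw [hpi]⟩
  rw [hE, ES, phi_edge_mem hg'] at hmem
  obtain ⟨j, hj⟩ := hmem
  rw [Sym2.eq_iff] at hj
  rcases hj with ⟨h1, h2⟩ | ⟨h1, h2⟩
  · obtain rfl : i = j := Option.some_inj.mp h1
    rcases par_inv hg' h2.symm with ⟨h3, h4⟩ | ⟨h3, h4⟩
    · exact h3
    · omega
  · obtain rfl : i' = j := Option.some_inj.mp h2
    rcases par_inv hg' h1.symm with ⟨h3, h4⟩ | ⟨h3, h4⟩
    · omega
    · exfalso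
      have hs2 : s i' = right := by rw [IH i' (by omega)]; exact h3
      exact hg.2.2 i' i hs2 hsi (by omega)

lemma phi_inj_aux (hg : Gd true s) (hg' : Gd true s') (hE : ES s = ES s') :
    ∀ i : Fin n, s i = s' i := by
  suffices H : ∀ k : ℕ, ∀ i : Fin n, (i : ℕ) = k → s i = s' i by
    exact fun i => H i i rfl
  intro k
  induction k using Nat.strong_induction_on with
  | _ k ih =>
    intro i hik
    subst hik
    have IH : ∀ j : Fin n, (j : ℕ) < (i : ℕ) → s j = s' j := fun j hj => ih j hj j rfl
    cases hsi : s i with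
    | hub =>
      have := (hub_mem hg).mp hsi
      rw [hE] at this
      exact ((hub_mem hg').mpr this).symm
    | left => exact (left_step hg hg' hE i IH hsi).symm
    | right =>
      cases hs'i : s' i with
      | hub =>
        have := (hub_mem hg').mp hs'i
        rw [← hE] at this
        rw [(hub_mem hg).mpr this] at hsi
        exact absurd hsi (by simp)
      | left =>
        have := left_step hg' hg hE.symm i (fun j hj => (IH j hj).symm) hs'i
        rw [this] at hsi
        exact absurd hsi (by simp)
      | right => rfl

lemma phi_injective (hg : Gd true s) (hg' : Gd true s') (h : phi s = phi s') : s = s' := by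
  have hE : ES s = ES s' := by rw [ES, ES, h]
  exact funext (phi_inj_aux hg hg' hE)

end inj

section surj
variable {n : ℕ}

lemma fan_adj_cases {i : Fin n} {u : Option (Fin n)} (h : (fanGraph n).Adj (some i) u) :
    u = none ∨ (∃ j : Fin n, u = some j ∧ ((j : ℕ) + 1 = (i : ℕ) ∨ (i : ℕ) + 1 = (j : ℕ))) := by
  rw [fanGraph, SimpleGraph.fromRel_adj] at h
  obtain ⟨hne, h | h⟩ := h
  · rcases h with h | ⟨a, b, ha, hb, hab⟩
    · simp at h
    · obtain rfl : i = a := Option.some_inj.mp ha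
      exact Or.inr ⟨b, hb, Or.inr hab⟩
  · rcases h with h | ⟨a, b, ha, hb, hab⟩
    · exact Or.inl h
    · obtain rfl : i = b := Option.some_inj.mp hb
      exact Or.inr ⟨a, ha, Or.inl hab⟩

lemma phi_surjective (H : (fanGraph n).Subgraph) (hsp : H.IsSpanning) (htree : H.coe.IsTree) :
    ∃ s : Fin n → St, Gd true s ∧ phi s = H := by
  classical
  set G' := H.spanningCoe with hG'
  have htree' : G'.IsTree := (isTree_iff_of_iso (H.spanningCoeEquivCoeOfSpanning hsp)).mpr htree
  have hconn := htree'.isConnected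
  set d : Option (Fin n) → ℕ := fun v => G'.dist v none with hd
  have claim : ∀ i : Fin n, ∃ t : St, G'.Adj (some i) (pvert t i) ∧ d (pvert t i) < d (some i) := by
    intro i
    have hreach : G'.Reachable (some i) none := hconn.1 _ _
    have hpos : 0 < d (some i) := hconn.pos_dist_of_ne (by simp)
    obtain ⟨p, hp⟩ := hreach.exists_walk_length_eq_dist
    cases p with
    | cons hadj q =>
      rename_i u
      have hdu : d u < d (some i) := by
        have h1 : G'.dist u none ≤ q.length := SimpleGraph.dist_le q
        simp only [SimpleGraph.Walk.length_cons] at hp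
        simp only [hd] at *
        omega
      have hfan : (fanGraph n).Adj (some i) u := H.spanningCoe_le hadj
      rcases fan_adj_cases hfan with rfl | ⟨j, rfl, hj | hj⟩
      · exact ⟨hub, by simpa [pvert] using hadj, by simpa [pvert] using hdu⟩
      · have hpv : pvert left i = some j := by
          have h0 : 0 < (i : ℕ) := by omega
          simp only [pvert, dif_pos h0]
          exact Option.some_inj.mpr (Fin.ext (by simp; omega))
        exact ⟨left, by rw [hpv]; exact hadj, by rw [hpv]; exact hdu⟩
      · have hpv : pvert right i = some j := by
          have h0 : (i : ℕ) + 1 < n := by have := j.isLt; omega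
          simp only [pvert, dif_pos h0]
          exact Option.some_inj.mpr (Fin.ext (by simp; omega))
        exact ⟨right, by rw [hpv]; exact hadj, by rw [hpv]; exact hdu⟩
  choose σ hσ1 hσ2 using claim
  have hgood : Gd true σ := by
    refine ⟨fun i hi => ?_, fun i hi => ?_, fun i j hi hj hij => ?_⟩
    · left
      by_contra h0
      have h1 := hσ1 i
      rw [hi] at h1
      have hpv : pvert left i = some i := by simp only [pvert, dif_neg h0]
      rw [hpv] at h1
      exact (SimpleGraph.irrefl _) h1
    · by_contra h0
      have h1 := hσ1 i
      rw [hi] at h1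
      have hpv : pvert right i = some i := by simp only [pvert, dif_neg h0]
      rw [hpv] at h1
      exact (SimpleGraph.irrefl _) h1
    · have h1 := hσ2 i
      rw [hi] at h1
      have h2 := hσ2 j
      rw [hj] at h2
      have hin : (i : ℕ) + 1 < n := by have := j.isLt; omega
      have hjn : 0 < (j : ℕ) := by omega
      have e1 : pvert right i = some j := by
        simp only [pvert, dif_pos hin]
        exact Option.some_inj.mpr (Fin.ext (by simp; omega))
      have e2 : pvert left j = some i := by
        simp only [pvert, dif_pos hjn]
        exact Option.some_inj.mpr (Fin.ext (by simp; omega))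
      rw [e1] at h1
      rw [e2] at h2
      omega
  refine ⟨σ, hgood, ?_⟩
  have hsub : ES σ ⊆ G'.edgeSet := by
    rw [ES]
    intro e he
    rw [phi_edge_mem hgood] at he
    obtain ⟨i, rfl⟩ := he
    exact hσ1 i
  have hES : ES σ = Set.range (fun i : Fin n => s(some i, par σ i)) := by
    ext e
    rw [ES, phi_edge_mem hgood]
    simp only [Set.mem_range]
    exact ⟨fun ⟨i, h⟩ => ⟨i, h.symm⟩, fun ⟨i, h⟩ => ⟨i, h.symm⟩⟩
  letI : Fintype G'.edgeSet := Fintype.ofFinite _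
  have hcard : G'.edgeFinset.card + 1 = Fintype.card (Option (Fin n)) := htree'.card_edgeFinset
  have hcardV : Fintype.card (Option (Fin n)) = n + 1 := by simp
  have hcard' : G'.edgeSet.ncard = n := by
    have h2 : G'.edgeFinset = G'.edgeSet.toFinset := rfl
    rw [Set.ncard_eq_toFinset_card', ← h2]
    omega
  have hrange_card : (Set.range (fun i : Fin n => s(some i, par σ i))).ncard = n := by
    have hinj : Function.Injective (fun i : Fin n => s(some i, par σ i)) :=
      fun i j hij => eInj hgood hij
    rw [← Nat.card_coe_set_eq, Nat.card_range_of_injective hinj]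
    simp
  have hEq : Set.range (fun i : Fin n => s(some i, par σ i)) = G'.edgeSet := by
    exact Set.eq_of_subset_of_ncard_le (hES ▸ hsub) (by omega) (Set.toFinite _)
  have hsc : (phi σ).spanningCoe = G' := by
    rw [← SimpleGraph.edgeSet_inj]
    rw [show (phi σ).spanningCoe.edgeSet = ES σ from rfl, hES, hEq]
  exact SimpleGraph.Subgraph.ext (hsp.verts_eq_univ.symm) (SimpleGraph.Subgraph.spanningCoe_inj.mp hsc)

end surj


theorem fan_spanning_trees (n : ℕ) (hn : 1 ≤ n) :
    Nat.card {H : (fanGraph n).Subgraph // H.IsSpanning ∧ H.coe.IsTree} = Nat.fib (2 * n) := by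
  have hbij : Function.Bijective (fun s : {s : Fin n → St // Gd true s} =>
      (⟨phi s.1, phi_spanning,
        (isTree_iff_of_iso ((phi s.1).spanningCoeEquivCoeOfSpanning phi_spanning)).mp
          ⟨phi_connected s.2, phi_acyclic s.2⟩⟩ :
        {H : (fanGraph n).Subgraph // H.IsSpanning ∧ H.coe.IsTree})) := by
    constructor
    · intro a b h
      exact Subtype.ext (phi_injective a.2 b.2 (congrArg Subtype.val h))
    · rintro ⟨H, hsp, htree⟩
      obtain ⟨s, hg, hphi⟩ := phi_surjective H hsp htree
      exact ⟨⟨s, hg⟩, Subtype.ext hphi⟩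
  rw [← Nat.card_congr (Equiv.ofBijective _ hbij), card_gd n true,
    if_neg (by omega : ¬ n = 0), if_pos rfl]
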